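/- Let n ≥ 2 and let P ∈ SOT_{2,n}. Then h_n(P) = 0, i.e. Σ_{k_1=1}^n ⋯ Σ_{k_n=1}^n Σ_{σ∈S_n} Σ_{γ∈S_n} sgn(σ) sgn(γ) · P_{k_1 σ(1) k_n γ(1)} · P_{k_2 σ(2) k_1 γ(2)} ⋯ P_{k_n σ(n) k_{n−1} γ(n)} = 0. -/

import Mathlib

open Finset

/-- `P ∈ SOT_{2,n}`: the `n×n×n×n` tensor `P` is the contraction along the third modes of two
symmetrically odeco tensors `T = ∑ i, λ i • (v i)^{⊗3}` and `S = ∑ j, μ j • (w j)^{⊗3}`,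
where `v` and `w` are orthonormal families in `ℝ^n`. -/
def InSOT2 (n : ℕ) (P : Fin n → Fin n → Fin n → Fin n → ℝ) : Prop :=
  ∃ (lam mu : Fin n → ℝ) (v w : Fin n → Fin n → ℝ),
    (∀ i j, (∑ k, v i k * v j k) = if i = j then 1 else 0) ∧
    (∀ i j, (∑ k, w i k * w j k) = if i = j then 1 else 0) ∧
    ∀ a b c d, P a b c d =
      ∑ s, (∑ i, lam i * (v i a * v i b * v i s)) * (∑ j, mu j * (w j c * w j d * w j s))

/-- The degree-`n` polynomial `hₙ` vanishes on `SOT_{2,n}`: here the product over `t : Fin n`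
of `P (k t) (σ t) (k (t-1)) (γ t)` (with cyclic `Fin n` subtraction, so the index before `t = 0`
is `k (n-1)`, i.e. `k₀ = kₙ`) encodes `p_{k₁σ(1)kₙγ(1)} p_{k₂σ(2)k₁γ(2)} ⋯ p_{kₙσ(n)k_{n-1}γ(n)}`. -/
theorem hn_vanishes_on_SOT
    (n : ℕ) (hn : 2 ≤ n) (P : Fin n → Fin n → Fin n → Fin n → ℝ) (hP : InSOT2 n P) :
    ∑ k : Fin n → Fin n, ∑ σ : Equiv.Perm (Fin n), ∑ γ : Equiv.Perm (Fin n),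
      ((Equiv.Perm.sign σ : ℤ) : ℝ) * ((Equiv.Perm.sign γ : ℤ) : ℝ) *
        ∏ t : Fin n, P (k t) (σ t) (k (t - ⟨1, by omega⟩)) (γ t) = 0 := by
  classical
  obtain ⟨lam, mu, v, w, hv, hw, hPdef⟩ := hP
  haveI : NeZero n := ⟨by omega⟩
  have hone : (⟨1, by omega⟩ : Fin n) = 1 := by
    ext
    simp [Fin.val_one, Nat.mod_eq_of_lt (by omega : 1 < n)]
  rw [show (∑ k : Fin n → Fin n, ∑ σ : Equiv.Perm (Fin n), ∑ γ : Equiv.Perm (Fin n),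
      ((Equiv.Perm.sign σ : ℤ) : ℝ) * ((Equiv.Perm.sign γ : ℤ) : ℝ) *
        ∏ t : Fin n, P (k t) (σ t) (k (t - ⟨1, by omega⟩)) (γ t))
      = ∑ k : Fin n → Fin n, ∑ σ : Equiv.Perm (Fin n), ∑ γ : Equiv.Perm (Fin n),
      ((Equiv.Perm.sign σ : ℤ) : ℝ) * ((Equiv.Perm.sign γ : ℤ) : ℝ) *
        ∏ t : Fin n, P (k t) (σ t) (k (t - 1)) (γ t) from by rw [hone]]
  set G : Fin n → Fin n → ℝ := fun i j => ∑ s, v i s * w j s with hGdef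
  -- columns of v are orthonormal
  have hv' : ∀ s s' : Fin n, (∑ m, v m s * v m s') = if s = s' then 1 else 0 := by
    have h1 : (Matrix.of v) * (Matrix.of v).transpose = 1 := by
      ext i j
      simpa [Matrix.mul_apply, Matrix.one_apply] using hv i j
    have h2 : (Matrix.of v).transpose * (Matrix.of v) = 1 := mul_eq_one_comm.mp h1
    intro s s'
    have h3 := congrFun (congrFun h2 s) s'
    simpa [Matrix.mul_apply, Matrix.one_apply] using h3
  have hGG : ∀ a b : Fin n, (∑ m, G m a * G m b) = if a = b then 1 else 0 := by
    intro a b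
    have h0 : (∑ m, G m a * G m b)
        = ∑ s, ∑ s', (w a s' * w b s) * ∑ m, v m s * v m s' := by
      simp only [hGdef, Finset.sum_mul, Finset.mul_sum]
      rw [Finset.sum_comm]
      refine Finset.sum_congr rfl fun s _ => ?_
      rw [Finset.sum_comm]
      refine Finset.sum_congr rfl fun s' _ => ?_
      refine Finset.sum_congr rfl fun m _ => by ring
    rw [h0]
    simp only [hv', mul_ite, mul_one, mul_zero, Finset.sum_ite_eq, Finset.mem_univ, if_true]
    simpa using hw a b
  -- expanded form of P
  have hPexp : ∀ a b c d : Fin n, P a b c d =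
      ∑ q : Fin n × Fin n, (lam q.1 * mu q.2 * G q.1 q.2) *
        ((v q.1 a * v q.1 b) * (w q.2 c * w q.2 d)) := by
    intro a b c d
    rw [hPdef a b c d, Fintype.sum_prod_type_right]
    simp only [Finset.sum_mul, Finset.mul_sum]
    rw [Finset.sum_comm]
    refine Finset.sum_congr rfl fun i _ => ?_
    rw [Finset.sum_comm]
    refine Finset.sum_congr rfl fun j _ => ?_
    simp only [hGdef]
    rw [Finset.mul_sum, Finset.sum_mul]
    refine Finset.sum_congr rfl fun s _ => by ring

  -- expand the product over t into a sum over choices f : Fin n → Fin n × Fin n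
  have hstep1 : ∀ (k : Fin n → Fin n) (σ γ : Equiv.Perm (Fin n)),
      (∏ t, P (k t) (σ t) (k (t - 1)) (γ t))
      = ∑ f : Fin n → Fin n × Fin n, ∏ t,
          ((lam (f t).1 * mu (f t).2 * G (f t).1 (f t).2) *
           ((v (f t).1 (k t) * v (f t).1 (σ t)) *
            (w (f t).2 (k (t - 1)) * w (f t).2 (γ t)))) := by
    intro k σ γ
    simp only [hPexp]
    rw [Finset.prod_univ_sum, Fintype.piFinset_univ]
  have h10 : (1 : Fin n) ≠ 0 := by
    rw [← hone]
    intro h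
    exact absurd (congrArg Fin.val h) (by simp)
  -- per-f evaluation
  have hT : ∀ f : Fin n → Fin n × Fin n,
      (∑ k : Fin n → Fin n, ∑ σ : Equiv.Perm (Fin n), ∑ γ : Equiv.Perm (Fin n),
        ((Equiv.Perm.sign σ : ℤ) : ℝ) * ((Equiv.Perm.sign γ : ℤ) : ℝ) *
        ∏ t, ((lam (f t).1 * mu (f t).2 * G (f t).1 (f t).2) *
           ((v (f t).1 (k t) * v (f t).1 (σ t)) *
            (w (f t).2 (k (t - 1)) * w (f t).2 (γ t)))))
      = (∏ t, (lam (f t).1 * mu (f t).2 * G (f t).1 (f t).2) * G (f t).1 (f (t + 1)).2) *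
        ((Matrix.of fun b t => v (f t).1 b).det * (Matrix.of fun b t => w (f t).2 b).det) := by
    intro f
    have hshift : ∀ k : Fin n → Fin n,
        (∏ t, w (f t).2 (k (t - 1))) = ∏ t, w (f (t + 1)).2 (k t) :=
      fun k => (Fintype.prod_equiv (Equiv.addRight (1 : Fin n))
        (fun t => w (f (t + 1)).2 (k t)) (fun t => w (f t).2 (k (t - 1)))
        (fun t => by simp)).symm
    have hsplit : ∀ (k : Fin n → Fin n) (σ γ : Equiv.Perm (Fin n)),
        (∏ t, ((lam (f t).1 * mu (f t).2 * G (f t).1 (f t).2) *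
           ((v (f t).1 (k t) * v (f t).1 (σ t)) *
            (w (f t).2 (k (t - 1)) * w (f t).2 (γ t)))))
        = ((∏ t, (lam (f t).1 * mu (f t).2 * G (f t).1 (f t).2)) *
            ((∏ t, v (f t).1 (k t)) * (∏ t, w (f t).2 (k (t - 1))))) *
          ((∏ t, v (f t).1 (σ t)) * (∏ t, w (f t).2 (γ t))) := by
      intro k σ γ
      simp only [Finset.prod_mul_distrib]
      ring
    have hdetM : (∑ σ : Equiv.Perm (Fin n), ((Equiv.Perm.sign σ : ℤ) : ℝ) *
        ∏ t, v (f t).1 (σ t)) = (Matrix.of fun b t => v (f t).1 b).det := by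
      rw [Matrix.det_apply']
      exact Finset.sum_congr rfl fun σ _ => rfl
    have hdetN : (∑ γ : Equiv.Perm (Fin n), ((Equiv.Perm.sign γ : ℤ) : ℝ) *
        ∏ t, w (f t).2 (γ t)) = (Matrix.of fun b t => w (f t).2 b).det := by
      rw [Matrix.det_apply']
      exact Finset.sum_congr rfl fun γ _ => rfl
    have hkA : (∑ k : Fin n → Fin n,
        (∏ t, (lam (f t).1 * mu (f t).2 * G (f t).1 (f t).2)) *
          ((∏ t, v (f t).1 (k t)) * (∏ t, w (f t).2 (k (t - 1)))))
        = ∏ t, (lam (f t).1 * mu (f t).2 * G (f t).1 (f t).2) * G (f t).1 (f (t + 1)).2 := by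
      rw [← Finset.mul_sum]
      have : (∑ k : Fin n → Fin n, (∏ t, v (f t).1 (k t)) * (∏ t, w (f t).2 (k (t - 1))))
          = ∏ t, G (f t).1 (f (t + 1)).2 := by
        have e1 : ∀ k : Fin n → Fin n,
            (∏ t, v (f t).1 (k t)) * (∏ t, w (f t).2 (k (t - 1)))
            = ∏ t, (v (f t).1 (k t) * w (f (t + 1)).2 (k t)) := by
          intro k
          rw [hshift k, ← Finset.prod_mul_distrib]
        simp only [e1]
        have e2 : (∏ t, G (f t).1 (f (t + 1)).2)
            = ∑ x : Fin n → Fin n, ∏ t, v (f t).1 (x t) * w (f (t + 1)).2 (x t) := by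
          rw [show (∏ t, G (f t).1 (f (t + 1)).2)
              = ∏ t, ∑ m, v (f t).1 m * w (f (t + 1)).2 m from rfl]
          rw [Finset.prod_univ_sum, Fintype.piFinset_univ]
        rw [e2]
      rw [this, ← Finset.prod_mul_distrib]
    calc (∑ k : Fin n → Fin n, ∑ σ : Equiv.Perm (Fin n), ∑ γ : Equiv.Perm (Fin n),
        ((Equiv.Perm.sign σ : ℤ) : ℝ) * ((Equiv.Perm.sign γ : ℤ) : ℝ) *
        ∏ t, ((lam (f t).1 * mu (f t).2 * G (f t).1 (f t).2) *
           ((v (f t).1 (k t) * v (f t).1 (σ t)) *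
            (w (f t).2 (k (t - 1)) * w (f t).2 (γ t)))))
        = (∑ k : Fin n → Fin n,
            (∏ t, (lam (f t).1 * mu (f t).2 * G (f t).1 (f t).2)) *
              ((∏ t, v (f t).1 (k t)) * (∏ t, w (f t).2 (k (t - 1))))) *
          ((∑ σ : Equiv.Perm (Fin n), ((Equiv.Perm.sign σ : ℤ) : ℝ) * ∏ t, v (f t).1 (σ t)) *
           (∑ γ : Equiv.Perm (Fin n), ((Equiv.Perm.sign γ : ℤ) : ℝ) * ∏ t, w (f t).2 (γ t))) := by
          rw [Finset.sum_mul_sum, Finset.sum_mul_sum]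
          refine Finset.sum_congr rfl fun k _ => ?_
          refine Finset.sum_congr rfl fun σ _ => ?_
          rw [Finset.mul_sum]
          refine Finset.sum_congr rfl fun γ _ => ?_
          rw [hsplit k σ γ]
          ring
      _ = _ := by rw [hkA, hdetM, hdetN]
  -- swap the sums and apply hT
  have hmain : (∑ k : Fin n → Fin n, ∑ σ : Equiv.Perm (Fin n), ∑ γ : Equiv.Perm (Fin n),
      ((Equiv.Perm.sign σ : ℤ) : ℝ) * ((Equiv.Perm.sign γ : ℤ) : ℝ) *
        ∏ t : Fin n, P (k t) (σ t) (k (t - 1)) (γ t))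
      = ∑ f : Fin n → Fin n × Fin n,
        (∏ t, (lam (f t).1 * mu (f t).2 * G (f t).1 (f t).2) * G (f t).1 (f (t + 1)).2) *
        ((Matrix.of fun b t => v (f t).1 b).det * (Matrix.of fun b t => w (f t).2 b).det) := by
    calc (∑ k : Fin n → Fin n, ∑ σ : Equiv.Perm (Fin n), ∑ γ : Equiv.Perm (Fin n),
      ((Equiv.Perm.sign σ : ℤ) : ℝ) * ((Equiv.Perm.sign γ : ℤ) : ℝ) *
        ∏ t : Fin n, P (k t) (σ t) (k (t - 1)) (γ t))
        = ∑ k : Fin n → Fin n, ∑ σ : Equiv.Perm (Fin n), ∑ γ : Equiv.Perm (Fin n),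
            ∑ f : Fin n → Fin n × Fin n,
            ((Equiv.Perm.sign σ : ℤ) : ℝ) * ((Equiv.Perm.sign γ : ℤ) : ℝ) *
            ∏ t, ((lam (f t).1 * mu (f t).2 * G (f t).1 (f t).2) *
               ((v (f t).1 (k t) * v (f t).1 (σ t)) *
                (w (f t).2 (k (t - 1)) * w (f t).2 (γ t)))) := by
          refine Finset.sum_congr rfl fun k _ => ?_
          refine Finset.sum_congr rfl fun σ _ => ?_
          refine Finset.sum_congr rfl fun γ _ => ?_
          rw [hstep1 k σ γ, Finset.mul_sum]
      _ = ∑ k : Fin n → Fin n, ∑ σ : Equiv.Perm (Fin n), ∑ f : Fin n → Fin n × Fin n,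
            ∑ γ : Equiv.Perm (Fin n), _ :=
          Finset.sum_congr rfl fun k _ => Finset.sum_congr rfl fun σ _ => Finset.sum_comm
      _ = ∑ k : Fin n → Fin n, ∑ f : Fin n → Fin n × Fin n, ∑ σ : Equiv.Perm (Fin n),
            ∑ γ : Equiv.Perm (Fin n), _ :=
          Finset.sum_congr rfl fun k _ => Finset.sum_comm
      _ = ∑ f : Fin n → Fin n × Fin n, ∑ k : Fin n → Fin n, ∑ σ : Equiv.Perm (Fin n),
            ∑ γ : Equiv.Perm (Fin n),
            ((Equiv.Perm.sign σ : ℤ) : ℝ) * ((Equiv.Perm.sign γ : ℤ) : ℝ) *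
            ∏ t, ((lam (f t).1 * mu (f t).2 * G (f t).1 (f t).2) *
               ((v (f t).1 (k t) * v (f t).1 (σ t)) *
                (w (f t).2 (k (t - 1)) * w (f t).2 (γ t)))) := Finset.sum_comm
      _ = _ := Finset.sum_congr rfl fun f _ => hT f
  rw [hmain]
  -- change summation to pairs (i, j) of functions
  rw [← Equiv.sum_comp (Equiv.arrowProdEquivProdArrow (Fin n) (fun _ => Fin n) (fun _ => Fin n)).symm
      (fun f : Fin n → Fin n × Fin n =>
        (∏ t, (lam (f t).1 * mu (f t).2 * G (f t).1 (f t).2) * G (f t).1 (f (t + 1)).2) *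
        ((Matrix.of fun b t => v (f t).1 b).det * (Matrix.of fun b t => w (f t).2 b).det))]
  rw [Fintype.sum_prod_type_right]
  refine Finset.sum_eq_zero fun j _ => ?_
  show (∑ i : Fin n → Fin n,
      (∏ t, (lam (i t) * mu (j t) * G (i t) (j t)) * G (i t) (j (t + 1))) *
      ((Matrix.of fun b t => v (i t) b).det * (Matrix.of fun b t => w (j t) b).det)) = 0
  by_cases hj : ∃ t : Fin n, j t = j (t + 1)
  · -- two adjacent columns of the w-matrix coincide
    obtain ⟨t0, ht0⟩ := hj
    have hne : t0 ≠ t0 + 1 := by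
      intro h
      exact h10 (by simpa using (left_eq_add.mp h))
    have hdet0 : (Matrix.of fun b t => w (j t) b).det = 0 := by
      refine Matrix.det_zero_of_column_eq hne fun b => ?_
      show w (j t0) b = w (j (t0 + 1)) b
      rw [ht0]
    refine Finset.sum_eq_zero fun i _ => ?_
    rw [hdet0, mul_zero, mul_zero]
  · push_neg at hj
    have hstep : (∑ i : Fin n → Fin n,
        (∏ t, (lam (i t) * mu (j t) * G (i t) (j t)) * G (i t) (j (t + 1))) *
        ((Matrix.of fun b t => v (i t) b).det * (Matrix.of fun b t => w (j t) b).det))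
        = (∑ i : Fin n → Fin n,
            (∏ t, (lam (i t) * mu (j t) * G (i t) (j t)) * G (i t) (j (t + 1))) *
            (Matrix.of fun b t => v (i t) b).det) *
          (Matrix.of fun b t => w (j t) b).det := by
      rw [Finset.sum_mul]
      exact Finset.sum_congr rfl fun i _ => by ring
    have hAmat : ((Matrix.of fun (b m : Fin n) => v m b) *
           (Matrix.of fun (m t : Fin n) =>
             lam m * mu (j t) * G m (j t) * G m (j (t + 1)))).det
        = ∑ i : Fin n → Fin n,
        (∏ t, (lam (i t) * mu (j t) * G (i t) (j t)) * G (i t) (j (t + 1))) *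
        (Matrix.of fun b t => v (i t) b).det := by
      rw [Matrix.det_apply']
      simp only [Matrix.mul_apply, Matrix.of_apply]
      calc (∑ σ : Equiv.Perm (Fin n), ((Equiv.Perm.sign σ : ℤ) : ℝ) *
            ∏ t, ∑ m, v m (σ t) * (lam m * mu (j t) * G m (j t) * G m (j (t + 1))))
          = ∑ σ : Equiv.Perm (Fin n), ∑ i : Fin n → Fin n,
              ((Equiv.Perm.sign σ : ℤ) : ℝ) *
              ∏ t, v (i t) (σ t) *
                (lam (i t) * mu (j t) * G (i t) (j t) * G (i t) (j (t + 1))) := by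
            refine Finset.sum_congr rfl fun σ _ => ?_
            rw [Finset.prod_univ_sum, Fintype.piFinset_univ, Finset.mul_sum]
        _ = ∑ i : Fin n → Fin n, ∑ σ : Equiv.Perm (Fin n),
              ((Equiv.Perm.sign σ : ℤ) : ℝ) *
              ∏ t, v (i t) (σ t) *
                (lam (i t) * mu (j t) * G (i t) (j t) * G (i t) (j (t + 1))) :=
            Finset.sum_comm
        _ = ∑ i : Fin n → Fin n,
              (∏ t, (lam (i t) * mu (j t) * G (i t) (j t)) * G (i t) (j (t + 1))) *
              (∑ σ : Equiv.Perm (Fin n), ((Equiv.Perm.sign σ : ℤ) : ℝ) *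
                ∏ t, v (i t) (σ t)) := by
            refine Finset.sum_congr rfl fun i _ => ?_
            rw [Finset.mul_sum]
            refine Finset.sum_congr rfl fun σ _ => ?_
            rw [Finset.prod_mul_distrib]
            ring
        _ = _ := by
            refine Finset.sum_congr rfl fun i _ => ?_
            congr 1
            simp [Matrix.det_apply']
    have hBdet : (Matrix.of fun (m t : Fin n) =>
        mu (j t) * (G m (j t) * G m (j (t + 1)))).det = 0 := by
      by_contra hdet
      have hvm : Matrix.vecMul (fun _ => (1 : ℝ))
          (Matrix.of fun (m t : Fin n) => mu (j t) * (G m (j t) * G m (j (t + 1)))) = 0 := by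
        funext t
        have hz : (∑ m, G m (j t) * G m (j (t + 1))) = 0 := by
          rw [hGG]
          simp [hj t]
        simp [Matrix.vecMul, dotProduct, ← Finset.mul_sum, hz]
      have h0 := Matrix.eq_zero_of_vecMul_eq_zero hdet hvm
      have h1 := congrFun h0 ⟨0, by omega⟩
      simp at h1
    have hA0 : ((Matrix.of fun (m t : Fin n) =>
        lam m * mu (j t) * G m (j t) * G m (j (t + 1)))).det = 0 := by
      have hfac : (Matrix.of fun (m t : Fin n) =>
          lam m * mu (j t) * G m (j t) * G m (j (t + 1)))
          = Matrix.diagonal lam *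
            (Matrix.of fun (m t : Fin n) => mu (j t) * (G m (j t) * G m (j (t + 1)))) := by
        ext m t
        rw [Matrix.diagonal_mul]
        simp only [Matrix.of_apply]
        ring
      rw [hfac, Matrix.det_mul, hBdet, mul_zero]
    rw [hstep, ← hAmat, Matrix.det_mul, hA0, mul_zero, zero_mul]
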